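/- Let p(z) = Σ_{j=0}^n a_j z^j with all a_j nonzero, and suppose the arguments φ_j = arg a_j satisfy φ_j ≡ (n−j)Δ + φ_n − π (mod 2π) for j = 0,…,n−1, where Δ = φ_{n-1} − φ_n + π. Then with x = ρ[p] the Cauchy radius of p, the number x e^{iΔ} is a zero of p; in particular, p has a zero of modulus exactly ρ[p]. -/

import Mathlib

/-- If the arguments of the coefficients satisfy `φⱼ ≡ (n-j)Δ + φₙ - π (mod 2π)` for
`j = 0,…,n-1` with `Δ = φ_{n-1} - φₙ + π`, then `x e^{iΔ}` is a zero of `p`, where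
`x = ρ[p]` is the Cauchy radius; in particular `p` has a zero of modulus exactly `ρ[p]`. -/
theorem argument_progression_gives_zero_of_modulus_cauchy_radius
    (n : ℕ) (a : ℕ → ℂ) (hn : 1 ≤ n) (ha : ∀ j ≤ n, a j ≠ 0)
    (harg : ∀ j ≤ n - 1, ∃ m : ℤ,
      (a j).arg = ((n - j : ℕ) : ℝ) * ((a (n - 1)).arg - (a n).arg + Real.pi)
        + (a n).arg - Real.pi + 2 * Real.pi * m)
    (x : ℝ) (hx : 0 < x)
    (hroot : ‖a n‖ * x ^ n
      = ∑ j ∈ Finset.range n, ‖a j‖ * x ^ j) :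
    (∑ j ∈ Finset.range (n + 1),
        a j * ((x : ℂ) * Complex.exp
          (((a (n - 1)).arg - (a n).arg + Real.pi : ℝ) * Complex.I)) ^ j = 0) ∧
      ‖(x : ℂ) * Complex.exp
          (((a (n - 1)).arg - (a n).arg + Real.pi : ℝ) * Complex.I)‖ = x := by
  set Δ : ℝ := (a (n - 1)).arg - (a n).arg + Real.pi with hΔ
  set c : ℂ := Complex.exp ((((n : ℝ) * Δ + (a n).arg : ℝ)) * Complex.I) with hc
  have hterm : ∀ j : ℕ, a j * ((x : ℂ) * Complex.exp ((Δ : ℝ) * Complex.I)) ^ j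
      = ((‖a j‖ : ℂ) * (x : ℂ) ^ j)
        * Complex.exp ((((a j).arg + j * Δ : ℝ)) * Complex.I) := by
    intro j
    conv_lhs => rw [← Complex.norm_mul_exp_arg_mul_I (a j)]
    rw [mul_pow, ← Complex.exp_nat_mul]
    push_cast
    rw [show ((a j).arg + (j:ℂ) * (Δ:ℂ)) * Complex.I
        = ((a j).arg:ℂ) * Complex.I + (j:ℂ) * ((Δ:ℂ) * Complex.I) by ring,
      Complex.exp_add]
    ring
  have habs : ‖(x : ℂ) * Complex.exp ((Δ : ℝ) * Complex.I)‖ = x := by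
    rw [norm_mul, Complex.norm_exp_ofReal_mul_I, Complex.norm_real, Real.norm_eq_abs,
      abs_of_pos hx, mul_one]
  refine ⟨?_, habs⟩
  have hlow : ∀ j < n, a j * ((x : ℂ) * Complex.exp ((Δ : ℝ) * Complex.I)) ^ j
      = -(((‖a j‖ : ℂ) * (x : ℂ) ^ j) * c) := by
    intro j hj
    obtain ⟨m, hm⟩ := harg j (by omega)
    rw [hterm j]
    have hcast : ((n - j : ℕ) : ℝ) = (n : ℝ) - j := by
      rw [Nat.cast_sub hj.le]
    have harg' : ((a j).arg + j * Δ : ℝ)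
        = ((n : ℝ) * Δ + (a n).arg) + (- Real.pi + 2 * Real.pi * m) := by
      rw [hm, hcast]; ring
    rw [harg', hc]
    push_cast
    have h1 : Complex.exp (((n:ℂ) * (Δ:ℂ) + ((a n).arg:ℂ) + (-(Real.pi:ℂ) + 2 * Real.pi * m)) * Complex.I)
        = -Complex.exp (((n:ℂ) * (Δ:ℂ) + ((a n).arg:ℂ)) * Complex.I) := by
      rw [show ((n:ℂ) * (Δ:ℂ) + ((a n).arg:ℂ) + (-(Real.pi:ℂ) + 2 * Real.pi * m)) * Complex.I
          = ((n:ℂ) * (Δ:ℂ) + ((a n).arg:ℂ)) * Complex.I + ((m:ℂ) * (2 * Real.pi * Complex.I)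
            + -((Real.pi:ℂ) * Complex.I)) by ring,
        Complex.exp_add, Complex.exp_add, Complex.exp_int_mul_two_pi_mul_I,
        Complex.exp_neg, Complex.exp_pi_mul_I]
      norm_num
    rw [h1]
    ring
  have hhigh : a n * ((x : ℂ) * Complex.exp ((Δ : ℝ) * Complex.I)) ^ n
      = ((‖a n‖ : ℂ) * (x : ℂ) ^ n) * c := by
    rw [hterm n, hc]
    congr 2
    push_cast
    ring
  rw [Finset.sum_range_succ, hhigh, Finset.sum_congr rfl (fun j hj => hlow j (Finset.mem_range.mp hj))]
  rw [Finset.sum_neg_distrib, ← Finset.sum_mul]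
  have : ((∑ j ∈ Finset.range n, (‖a j‖ : ℂ) * (x : ℂ) ^ j))
      = ((‖a n‖ : ℂ) * (x : ℂ) ^ n) := by
    push_cast
    exact_mod_cast congrArg (fun r : ℝ => (r : ℂ)) hroot.symm
  rw [this]
  ring
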